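/- Let $\n$ be the vector space with basis $\{y_{i,j} : (i,j) \in \mathbb{N}^2 \setminus \{(0,0)\}\}$ with bracket given by the nonzero relations $[y_{i,0}, y_{0,n}] = -y_{i,n}$ (for $i,n > 0$), $[y_{i,0}, y_{m,n}] = -y_{m+i,n}$ for $m, n > 0$, $[y_{0,j}, y_{m,n}] = y_{m,n+j}$ for $m, n > 0$ (all other brackets of basis elements zero, extended antisymmetrically). Then this bracket satisfies the Jacobi identity, so $\n$ is a Lie algebra. -/

import Mathlib

set_option linter.unusedVariables false

noncomputable def EE (i j : ℕ) : {p : ℕ × ℕ // p ≠ (0,0)} →₀ ℚ :=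
  if h : ((i,j) : ℕ × ℕ) ≠ (0,0) then Finsupp.single ⟨(i,j), h⟩ 1 else 0

noncomputable def FF (i j m n : ℕ) : {p : ℕ × ℕ // p ≠ (0,0)} →₀ ℚ :=
  if (i = 0 ∧ j = 0) ∨ (m = 0 ∧ n = 0) then 0
  else if j = 0 ∧ n = 0 then 0
  else if j = 0 ∧ m = 0 then -(EE i n)
  else if j = 0 then -(EE (m+i) n)
  else if i = 0 ∧ m = 0 then 0
  else if i = 0 ∧ n = 0 then EE m j
  else if i = 0 then EE m (n+j)
  else if n = 0 then EE (i+m) j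
  else if m = 0 then -(EE i (j+n))
  else 0

lemma bb_lemma
    (br : ({p : ℕ × ℕ // p ≠ (0,0)} →₀ ℚ) →ₗ[ℚ]
          ({p : ℕ × ℕ // p ≠ (0,0)} →₀ ℚ) →ₗ[ℚ]
          ({p : ℕ × ℕ // p ≠ (0,0)} →₀ ℚ))
    (hanti : ∀ x y : {p : ℕ × ℕ // p ≠ (0,0)},
      br (Finsupp.single x 1) (Finsupp.single y 1) =
        -(br (Finsupp.single y 1) (Finsupp.single x 1)))
    (h1 : ∀ i n : ℕ, ∀ (hi : 0 < i) (hn : 0 < n),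
      br (Finsupp.single ⟨(i,0), by rw [Ne, Prod.ext_iff]; omega⟩ 1)
         (Finsupp.single ⟨(0,n), by rw [Ne, Prod.ext_iff]; omega⟩ 1) =
        -(Finsupp.single ⟨(i,n), by rw [Ne, Prod.ext_iff]; omega⟩ 1))
    (h2 : ∀ i m n : ℕ, ∀ (hi : 0 < i) (hm : 0 < m) (hn : 0 < n),
      br (Finsupp.single ⟨(i,0), by rw [Ne, Prod.ext_iff]; omega⟩ 1)
         (Finsupp.single ⟨(m,n), by rw [Ne, Prod.ext_iff]; omega⟩ 1) =
        -(Finsupp.single ⟨(m+i,n), by rw [Ne, Prod.ext_iff]; omega⟩ 1))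
    (h3 : ∀ j m n : ℕ, ∀ (hj : 0 < j) (hm : 0 < m) (hn : 0 < n),
      br (Finsupp.single ⟨(0,j), by rw [Ne, Prod.ext_iff]; omega⟩ 1)
         (Finsupp.single ⟨(m,n), by rw [Ne, Prod.ext_iff]; omega⟩ 1) =
        Finsupp.single ⟨(m,n+j), by rw [Ne, Prod.ext_iff]; omega⟩ 1)
    (h4 : ∀ i m : ℕ, ∀ (hi : 0 < i) (hm : 0 < m),
      br (Finsupp.single ⟨(i,0), by rw [Ne, Prod.ext_iff]; omega⟩ 1)
         (Finsupp.single ⟨(m,0), by rw [Ne, Prod.ext_iff]; omega⟩ 1) = 0)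
    (h5 : ∀ j n : ℕ, ∀ (hj : 0 < j) (hn : 0 < n),
      br (Finsupp.single ⟨(0,j), by rw [Ne, Prod.ext_iff]; omega⟩ 1)
         (Finsupp.single ⟨(0,n), by rw [Ne, Prod.ext_iff]; omega⟩ 1) = 0)
    (h6 : ∀ i j m n : ℕ, ∀ (hi : 0 < i) (hj : 0 < j) (hm : 0 < m) (hn : 0 < n),
      br (Finsupp.single ⟨(i,j), by rw [Ne, Prod.ext_iff]; omega⟩ 1)
         (Finsupp.single ⟨(m,n), by rw [Ne, Prod.ext_iff]; omega⟩ 1) = 0) :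
    ∀ i j m n : ℕ, br (EE i j) (EE m n) = FF i j m n := by
  intro i j m n
  rcases i with _|a <;> rcases j with _|b <;> rcases m with _|c <;> rcases n with _|d <;>
    simp [EE, FF]
  case zero.succ.zero.succ => exact h5 _ _ (Nat.succ_pos _) (Nat.succ_pos _)
  case zero.succ.succ.zero =>
    refine (hanti _ _).trans ?_
    rw [h1 (c+1) (b+1) (Nat.succ_pos _) (Nat.succ_pos _), neg_neg]
  case zero.succ.succ.succ => exact h3 _ _ _ (Nat.succ_pos _) (Nat.succ_pos _) (Nat.succ_pos _)
  case succ.zero.zero.succ => exact h1 _ _ (Nat.succ_pos _) (Nat.succ_pos _)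
  case succ.zero.succ.zero => exact h4 _ _ (Nat.succ_pos _) (Nat.succ_pos _)
  case succ.zero.succ.succ => exact h2 _ _ _ (Nat.succ_pos _) (Nat.succ_pos _) (Nat.succ_pos _)
  case succ.succ.zero.succ =>
    refine (hanti _ _).trans ?_
    rw [h3 (d+1) (a+1) (b+1) (Nat.succ_pos _) (Nat.succ_pos _) (Nat.succ_pos _)]
  case succ.succ.succ.zero =>
    refine (hanti _ _).trans ?_
    rw [h2 (c+1) (a+1) (b+1) (Nat.succ_pos _) (Nat.succ_pos _) (Nat.succ_pos _), neg_neg]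
  case succ.succ.succ.succ =>
    exact h6 _ _ _ _ (Nat.succ_pos _) (Nat.succ_pos _) (Nat.succ_pos _) (Nat.succ_pos _)


lemma jac_basis
    (br : ({p : ℕ × ℕ // p ≠ (0,0)} →₀ ℚ) →ₗ[ℚ]
          ({p : ℕ × ℕ // p ≠ (0,0)} →₀ ℚ) →ₗ[ℚ]
          ({p : ℕ × ℕ // p ≠ (0,0)} →₀ ℚ))
    (hbb : ∀ i j m n : ℕ, br (EE i j) (EE m n) = FF i j m n) :
    ∀ i j m n p q : ℕ,
    br (EE i j) (br (EE m n) (EE p q)) =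
      br (br (EE i j) (EE m n)) (EE p q) + br (EE m n) (br (EE i j) (EE p q)) := by
  intro i j m n p q
  rcases i with _|a <;> rcases j with _|b <;> rcases m with _|c <;> rcases n with _|d <;>
    rcases p with _|e <;> rcases q with _|f <;>
    simp only [hbb, FF, Nat.add_eq_zero, one_ne_zero, and_false, false_and, and_true,
      true_and, or_false, false_or, or_true, true_or, and_self, if_true, if_false,
      eq_self_iff_true, not_false_eq_true, not_true, ite_true, ite_false, ite_self,
      map_neg, map_zero, LinearMap.neg_apply, LinearMap.zero_apply, neg_neg, neg_zero,
      add_zero, zero_add, and_imp, imp_false]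
  all_goals simp [Nat.add_comm, Nat.add_left_comm, Nat.add_assoc]

lemma EE_eq (a : {p : ℕ × ℕ // p ≠ (0,0)}) : EE a.1.1 a.1.2 = Finsupp.single a 1 := by
  obtain ⟨⟨i, j⟩, h⟩ := a
  exact dif_pos h

lemma single_eq_smul (a : {p : ℕ × ℕ // p ≠ (0,0)}) (r : ℚ) :
    Finsupp.single a r = r • Finsupp.single a 1 := by
  rw [Finsupp.smul_single, smul_eq_mul, mul_one]

theorem stmt19_aux
    (br : ({p : ℕ × ℕ // p ≠ (0,0)} →₀ ℚ) →ₗ[ℚ]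
          ({p : ℕ × ℕ // p ≠ (0,0)} →₀ ℚ) →ₗ[ℚ]
          ({p : ℕ × ℕ // p ≠ (0,0)} →₀ ℚ))
    (hanti : ∀ x y : {p : ℕ × ℕ // p ≠ (0,0)},
      br (Finsupp.single x 1) (Finsupp.single y 1) =
        -(br (Finsupp.single y 1) (Finsupp.single x 1)))
    (hbb : ∀ i j m n : ℕ, br (EE i j) (EE m n) = FF i j m n) :
    (∀ x y, br x y = -(br y x)) ∧
    (∀ x y z, br x (br y z) = br (br x y) z + br y (br x z)) := by
  have jac := jac_basis br hbb
  constructor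
  · intro x y
    induction x using Finsupp.induction_linear with
    | zero => simp
    | add u v hu hv =>
        simp only [map_add, LinearMap.add_apply]
        rw [hu, hv]; abel
    | single a r =>
      induction y using Finsupp.induction_linear with
      | zero => simp
      | add u v hu hv =>
        simp only [map_add, LinearMap.add_apply]
        rw [hu, hv]; abel
      | single b s =>
        rw [single_eq_smul a r, single_eq_smul b s]
        simp only [map_smul, LinearMap.smul_apply]
        rw [hanti a b]
        simp [smul_comm r s]
  · intro x y z
    induction x using Finsupp.induction_linear with
    | zero => simp
    | add u v hu hv =>
        simp only [map_add, LinearMap.add_apply]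
        rw [hu, hv]; abel
    | single a r =>
      induction y using Finsupp.induction_linear with
      | zero => simp
      | add u v hu hv =>
        simp only [map_add, LinearMap.add_apply]
        rw [hu, hv]; abel
      | single b s =>
        induction z using Finsupp.induction_linear with
        | zero => simp
        | add u v hu hv =>
        simp only [map_add, LinearMap.add_apply]
        rw [hu, hv]; abel
        | single c t =>
          obtain ⟨⟨i, j⟩, hij⟩ := a
          obtain ⟨⟨m, n⟩, hmn⟩ := b
          obtain ⟨⟨p, q⟩, hpq⟩ := c
          rw [single_eq_smul _ r, single_eq_smul _ s, single_eq_smul _ t,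
            ← EE_eq ⟨(i,j), hij⟩, ← EE_eq ⟨(m,n), hmn⟩, ← EE_eq ⟨(p,q), hpq⟩]
          simp only [map_smul, LinearMap.smul_apply]
          rw [jac i j m n p q]
          simp only [smul_add, smul_smul]
          ring_nf



/-- The Lie algebra of primitives of the Ringel-Hall algebra of
two-colored ladders (a block of color 1 above a block of color 2).  Let `V` be the
free vector space on basis `{y_{i,j} : (i,j) ∈ ℕ² \ {(0,0)}}` and `br` the bilinear
bracket determined by the nonzero relations `[y_{i,0}, y_{0,n}] = -y_{i,n}` (`i,n>0`),
`[y_{i,0}, y_{m,n}] = -y_{m+i,n}` (`i,m,n>0`), `[y_{0,j}, y_{m,n}] = y_{m,n+j}`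
(`j,m,n>0`), all other brackets of basis elements zero, extended antisymmetrically.
Then `br` is antisymmetric and satisfies the Jacobi identity, so `V` is a Lie
algebra. -/
theorem stmt19
    (br : ({p : ℕ × ℕ // p ≠ (0,0)} →₀ ℚ) →ₗ[ℚ]
          ({p : ℕ × ℕ // p ≠ (0,0)} →₀ ℚ) →ₗ[ℚ]
          ({p : ℕ × ℕ // p ≠ (0,0)} →₀ ℚ))
    (hanti : ∀ x y : {p : ℕ × ℕ // p ≠ (0,0)},
      br (Finsupp.single x 1) (Finsupp.single y 1) =
        -(br (Finsupp.single y 1) (Finsupp.single x 1)))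
    (h1 : ∀ i n : ℕ, ∀ (hi : 0 < i) (hn : 0 < n),
      br (Finsupp.single ⟨(i,0), by simp [Prod.ext_iff]; omega⟩ 1)
         (Finsupp.single ⟨(0,n), by simp [Prod.ext_iff]; omega⟩ 1) =
        -(Finsupp.single ⟨(i,n), by simp [Prod.ext_iff]; omega⟩ 1))
    (h2 : ∀ i m n : ℕ, ∀ (hi : 0 < i) (hm : 0 < m) (hn : 0 < n),
      br (Finsupp.single ⟨(i,0), by simp [Prod.ext_iff]; omega⟩ 1)
         (Finsupp.single ⟨(m,n), by simp [Prod.ext_iff]; omega⟩ 1) =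
        -(Finsupp.single ⟨(m+i,n), by simp [Prod.ext_iff]; omega⟩ 1))
    (h3 : ∀ j m n : ℕ, ∀ (hj : 0 < j) (hm : 0 < m) (hn : 0 < n),
      br (Finsupp.single ⟨(0,j), by simp [Prod.ext_iff]; omega⟩ 1)
         (Finsupp.single ⟨(m,n), by simp [Prod.ext_iff]; omega⟩ 1) =
        Finsupp.single ⟨(m,n+j), by simp [Prod.ext_iff]; omega⟩ 1)
    (h4 : ∀ i m : ℕ, ∀ (hi : 0 < i) (hm : 0 < m),
      br (Finsupp.single ⟨(i,0), by simp [Prod.ext_iff]; omega⟩ 1)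
         (Finsupp.single ⟨(m,0), by simp [Prod.ext_iff]; omega⟩ 1) = 0)
    (h5 : ∀ j n : ℕ, ∀ (hj : 0 < j) (hn : 0 < n),
      br (Finsupp.single ⟨(0,j), by simp [Prod.ext_iff]; omega⟩ 1)
         (Finsupp.single ⟨(0,n), by simp [Prod.ext_iff]; omega⟩ 1) = 0)
    (h6 : ∀ i j m n : ℕ, ∀ (hi : 0 < i) (hj : 0 < j) (hm : 0 < m) (hn : 0 < n),
      br (Finsupp.single ⟨(i,j), by simp [Prod.ext_iff]; omega⟩ 1)
         (Finsupp.single ⟨(m,n), by simp [Prod.ext_iff]; omega⟩ 1) = 0) :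
    -- antisymmetry on all of V and the Jacobi identity (in Leibniz form):
    (∀ x y, br x y = -(br y x)) ∧
    (∀ x y z, br x (br y z) = br (br x y) z + br y (br x z)) := by
  exact stmt19_aux br hanti (bb_lemma br hanti h1 h2 h3 h4 h5 h6)
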